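/- arXiv:2307.10158 — 2 statements merged into one kernel-verified Lean document; each statement's English description precedes it below -/
import Mathlib

section
/- Let X ∈ ℝ^{n×p}, β ∈ ℝ^p, and let pen be a real-valued polyhedral gauge on ℝ^p (pen(b) = max{⟨u_1,b⟩,…,⟨u_k,b⟩} with u_1 = 0). Then the set V_β = {y ∈ ℝ^n : ∃λ > 0, ∃β̂ ∈ S_{X,λpen}(y) with ∂pen(β̂) = ∂pen(β)} is a convex subset of ℝ^n. -/
open scoped RealInnerProductSpace

noncomputable section

/-- Convert a plain coordinate vector to an element of Euclidean space. -/
def toEuc {n : ℕ} (v : Fin n → ℝ) : EuclideanSpace ℝ (Fin n) :=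
  (WithLp.equiv 2 (Fin n → ℝ)).symm v

/-- The subdifferential of `φ : ℝ^p → ℝ` at `β`:
`∂φ(β) = {s : φ(β) + ⟪s, b − β⟫ ≤ φ(b) for all b}`. -/
def subdiff {p : ℕ} (φ : EuclideanSpace ℝ (Fin p) → ℝ) (β : EuclideanSpace ℝ (Fin p)) :
    Set (EuclideanSpace ℝ (Fin p)) :=
  {s | ∀ b, φ β + ⟪s, b - β⟫ ≤ φ b}

/-- `S_{X,λpen}(y)`: the set of minimizers of `b ↦ (1/2)‖y − Xb‖₂² + λ·pen(b)`. -/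
def Smin {n p : ℕ} (X : Matrix (Fin n) (Fin p) ℝ) (lam : ℝ)
    (pen : EuclideanSpace ℝ (Fin p) → ℝ) (y : EuclideanSpace ℝ (Fin n)) :
    Set (EuclideanSpace ℝ (Fin p)) :=
  {b | ∀ b' : EuclideanSpace ℝ (Fin p), (1/2) * ‖y - toEuc (X.mulVec (WithLp.ofLp b))‖^2 + lam * pen b
        ≤ (1/2) * ‖y - toEuc (X.mulVec (WithLp.ofLp b'))‖^2 + lam * pen b'}

/-- The row space of a matrix `X`: `{Xᵀz : z ∈ ℝ^n}`. -/
def rowSpace {n p : ℕ} (X : Matrix (Fin n) (Fin p) ℝ) : Set (EuclideanSpace ℝ (Fin p)) :=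
  Set.range fun z : EuclideanSpace ℝ (Fin n) => toEuc (X.transpose.mulVec (WithLp.ofLp z))

/-- The normal cone of a set `K` at `x`: `{s : ⟪s, b − x⟫ ≤ 0 for all b ∈ K}`. -/
def normalCone' {p : ℕ} (K : Set (EuclideanSpace ℝ (Fin p))) (x : EuclideanSpace ℝ (Fin p)) :
    Set (EuclideanSpace ℝ (Fin p)) :=
  {s | ∀ b ∈ K, ⟪s, b - x⟫ ≤ 0}

/-- The supremum norm `‖x‖_∞` on Euclidean space. -/
def supNorm {p : ℕ} (x : EuclideanSpace ℝ (Fin p)) : ℝ := ⨆ i, abs (x i)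

/-- `F` is an (exposed) face of `P`: `F = {x ∈ P : ⟪a,x⟫ = c}` for some valid inequality
`⟪a,x⟫ ≤ c` of `P`. -/
def IsFace {p : ℕ} (P F : Set (EuclideanSpace ℝ (Fin p))) : Prop :=
  ∃ (a : EuclideanSpace ℝ (Fin p)) (c : ℝ),
    (∀ x ∈ P, ⟪a, x⟫ ≤ c) ∧ F = {x ∈ P | ⟪a, x⟫ = c}

/-! ### Auxiliary lemmas about polyhedral gauges -/

section Pen
variable {p k : ℕ} (u : Fin (k + 1) → EuclideanSpace ℝ (Fin p))
  (pen : EuclideanSpace ℝ (Fin p) → ℝ)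
  (hpen : ∀ x, pen x = Finset.univ.sup' Finset.univ_nonempty fun i => ⟪u i, x⟫)
include hpen

lemma pen_ub (i : Fin (k+1)) (x) : ⟪u i, x⟫ ≤ pen x := by
  rw [hpen]; exact Finset.le_sup' (fun i => ⟪u i, x⟫) (Finset.mem_univ i)

lemma pen_add (x y) : pen (x + y) ≤ pen x + pen y := by
  rw [hpen (x + y)]
  apply Finset.sup'_le
  intro i _
  rw [inner_add_right]
  exact add_le_add (pen_ub u pen hpen i x) (pen_ub u pen hpen i y)

lemma pen_smul (c : ℝ) (hc : 0 ≤ c) (x) : pen (c • x) = c * pen x := by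
  rw [hpen, hpen]
  rw [Finset.comp_sup'_eq_sup'_comp _ (fun r : ℝ => c * r) (fun a b => mul_max_of_nonneg a b hc)]
  congr 1; funext i; simp [inner_smul_right]

lemma pen_zero : pen 0 = 0 := by
  have := pen_smul u pen hpen 0 le_rfl 0
  simpa using this

lemma subdiff_char (s x) :
    s ∈ subdiff pen x ↔ (∀ b, ⟪s, b⟫ ≤ pen b) ∧ ⟪s, x⟫ = pen x := by
  constructor
  · intro h
    have h2 := h ((2:ℝ) • x)
    rw [pen_smul u pen hpen 2 (by norm_num) x] at h2
    have hx2 : ⟪s, (2:ℝ) • x - x⟫ = ⟪s, x⟫ := by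
      congr 1; module
    rw [hx2] at h2
    have h0 := h 0
    rw [pen_zero u pen hpen] at h0
    simp only [zero_sub, inner_neg_right] at h0
    have hsx : ⟪s, x⟫ = pen x := le_antisymm (by linarith) (by linarith)
    refine ⟨fun b => ?_, hsx⟩
    have hb := h (x + b)
    have : ⟪s, x + b - x⟫ = ⟪s, b⟫ := by congr 1; module
    rw [this] at hb
    have := pen_add u pen hpen x b
    linarith
  · rintro ⟨h1, h2⟩ b
    rw [inner_sub_right, h2]
    have := h1 b
    linarith

lemma subdiff_nonempty (x) : (subdiff pen x).Nonempty := by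
  obtain ⟨i, -, hi⟩ := Finset.exists_mem_eq_sup' (Finset.univ_nonempty) fun i => ⟪u i, x⟫
  exact ⟨u i, (subdiff_char u pen hpen _ x).2
    ⟨fun b => pen_ub u pen hpen i b, ((hpen x).trans hi).symm⟩⟩

lemma subdiff_combo (x1 x2 : EuclideanSpace ℝ (Fin p)) (a b : ℝ) (ha : 0 < a) (hb : 0 < b)
    (h : subdiff pen x1 = subdiff pen x2) :
    subdiff pen (a • x1 + b • x2) = subdiff pen x1 := by
  have key : ∀ s ∈ subdiff pen x1, ⟪s, a • x1 + b • x2⟫ = a * pen x1 + b * pen x2 ∧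
      pen (a • x1 + b • x2) = a * pen x1 + b * pen x2 := by
    intro s hs
    have hs1 := (subdiff_char u pen hpen s x1).1 hs
    have hs2 := (subdiff_char u pen hpen s x2).1 (h ▸ hs)
    have hin : ⟪s, a • x1 + b • x2⟫ = a * pen x1 + b * pen x2 := by
      rw [inner_add_right, real_inner_smul_right, real_inner_smul_right, hs1.2, hs2.2]
    have hle : pen (a • x1 + b • x2) ≤ a * pen x1 + b * pen x2 := by
      have := pen_add u pen hpen (a • x1) (b • x2)
      rw [pen_smul u pen hpen a ha.le, pen_smul u pen hpen b hb.le] at this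
      exact this
    have hge : a * pen x1 + b * pen x2 ≤ pen (a • x1 + b • x2) := hin ▸ hs1.1 _
    exact ⟨hin, le_antisymm hle hge⟩
  obtain ⟨s0, hs0⟩ := subdiff_nonempty u pen hpen x1
  have hpc : pen (a • x1 + b • x2) = a * pen x1 + b * pen x2 := (key s0 hs0).2
  ext s
  rw [subdiff_char u pen hpen, subdiff_char u pen hpen]
  constructor
  · rintro ⟨h1, h2⟩
    refine ⟨h1, ?_⟩
    rw [hpc, inner_add_right, real_inner_smul_right, real_inner_smul_right] at h2
    have e1 := h1 x1
    have e2 := h1 x2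
    nlinarith
  · rintro ⟨h1, h2⟩
    refine ⟨h1, ?_⟩
    have hs2 : ⟪s, x2⟫ = pen x2 :=
      ((subdiff_char u pen hpen s x2).1
        (h ▸ ((subdiff_char u pen hpen s x1).2 ⟨h1, h2⟩))).2
    rw [hpc, inner_add_right, real_inner_smul_right, real_inner_smul_right, h2, hs2]

lemma subgrad_norm (lam : ℝ) (hlam : 0 < lam) (βh : EuclideanSpace ℝ (Fin p))
    (s' : EuclideanSpace ℝ (Fin p))
    (h : ∀ b, lam * pen βh + ⟪s', b - βh⟫ ≤ lam * pen b) :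
    lam⁻¹ • s' ∈ subdiff pen βh := by
  intro b
  have g := h b
  rw [real_inner_smul_left]
  have h2 : ⟪s', b - βh⟫ ≤ lam * (pen b - pen βh) := by linarith
  have h3 : lam⁻¹ * ⟪s', b - βh⟫ ≤ lam⁻¹ * (lam * (pen b - pen βh)) :=
    mul_le_mul_of_nonneg_left h2 (inv_nonneg.2 hlam.le)
  rw [← mul_assoc, inv_mul_cancel₀ hlam.ne', one_mul] at h3
  linarith

end Pen

/-! ### Auxiliary lemmas about the least squares term -/

section Mat
variable {n p : ℕ} (X : Matrix (Fin n) (Fin p) ℝ)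

lemma adjE (z : EuclideanSpace ℝ (Fin n)) (v : EuclideanSpace ℝ (Fin p)) :
    ⟪toEuc (X.transpose.mulVec z), v⟫ = ⟪z, toEuc (X.mulVec v)⟫ := by
  simp [toEuc, PiLp.inner_apply, Matrix.mulVec, dotProduct, Finset.sum_mul, Finset.mul_sum,
    Matrix.transpose_apply]
  rw [Finset.sum_comm]
  simp [mul_comm, mul_left_comm, mul_assoc]

lemma expandE (y : EuclideanSpace ℝ (Fin n)) (βh b : EuclideanSpace ℝ (Fin p)) :
    (1/2) * ‖y - toEuc (X.mulVec b)‖^2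
      = (1/2) * ‖y - toEuc (X.mulVec βh)‖^2
        - ⟪toEuc (X.transpose.mulVec (y - toEuc (X.mulVec βh))), b - βh⟫
        + (1/2) * ‖toEuc (X.mulVec (b - βh))‖^2 := by
  have hsub : toEuc (X.mulVec (b - βh)) = toEuc (X.mulVec b) - toEuc (X.mulVec βh) :=
    congrArg toEuc (X.mulVec_sub b βh)
  have hdecomp : y - toEuc (X.mulVec b)
      = (y - toEuc (X.mulVec βh)) - toEuc (X.mulVec (b - βh)) := by
    rw [hsub]; abel
  rw [hdecomp, adjE, norm_sub_sq_real]
  rw [show WithLp.toLp 2 (y.ofLp - (toEuc (X.mulVec βh.ofLp)).ofLp) = y - toEuc (X.mulVec βh) from rfl,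
    WithLp.ofLp_sub]
  ring

lemma tmE_add (v w : EuclideanSpace ℝ (Fin p)) :
    toEuc (X.mulVec (v + w)) = toEuc (X.mulVec v) + toEuc (X.mulVec w) :=
  congrArg toEuc (X.mulVec_add v w)

lemma tmE_smul (c : ℝ) (v : EuclideanSpace ℝ (Fin p)) :
    toEuc (X.mulVec (c • v)) = c • toEuc (X.mulVec v) :=
  congrArg toEuc (X.mulVec_smul c v)

end Mat

/-! ### Optimality conditions -/

section Opt
variable {n p : ℕ} (X : Matrix (Fin n) (Fin p) ℝ)
  (pen : EuclideanSpace ℝ (Fin p) → ℝ)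

lemma Smin_of_subgrad (lam : ℝ) (y : EuclideanSpace ℝ (Fin n))
    (βh : EuclideanSpace ℝ (Fin p))
    (h : ∀ b, lam * pen βh + ⟪toEuc (X.transpose.mulVec (y - toEuc (X.mulVec βh))), b - βh⟫
        ≤ lam * pen b) :
    βh ∈ Smin X lam pen y := by
  intro b
  show (1/2) * ‖y - toEuc (X.mulVec βh)‖^2 + lam * pen βh
      ≤ (1/2) * ‖y - toEuc (X.mulVec (toEuc b))‖^2 + lam * pen (toEuc b)
  rw [expandE X y βh (toEuc b)]
  have h1 := h (toEuc b)
  have h2 : (0:ℝ) ≤ (1/2) * ‖toEuc (X.mulVec (toEuc b - βh))‖^2 := by positivity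
  linarith

lemma subgrad_of_Smin
    (hadd : ∀ x y, pen (x + y) ≤ pen x + pen y)
    (hsmul : ∀ (c : ℝ), 0 ≤ c → ∀ x, pen (c • x) = c * pen x)
    (lam : ℝ) (hlam : 0 < lam) (y : EuclideanSpace ℝ (Fin n))
    (βh : EuclideanSpace ℝ (Fin p)) (hmin : βh ∈ Smin X lam pen y) :
    ∀ b, lam * pen βh + ⟪toEuc (X.transpose.mulVec (y - toEuc (X.mulVec βh))), b - βh⟫
        ≤ lam * pen b := by
  intro b
  set s := toEuc (X.transpose.mulVec (y - toEuc (X.mulVec βh))) with hs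
  set C := ‖toEuc (X.mulVec (b - βh))‖^2 with hC
  have hC0 : 0 ≤ C := sq_nonneg _
  have step : ∀ t : ℝ, 0 < t → t ≤ 1 →
      lam * pen βh + ⟪s, b - βh⟫ ≤ lam * pen b + t/2 * C := by
    intro t ht0 ht1
    have hmt := hmin (βh + t • (b - βh))
    rw [expandE X y βh (βh + t • (b - βh))] at hmt
    have e1 : βh + t • (b - βh) - βh = t • (b - βh) := by abel
    rw [e1, ← WithLp.ofLp_sub (x := βh + t • (b - βh)) (y := βh), e1, WithLp.ofLp_smul, WithLp.ofLp_sub] at hmt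
    have e2 : ⟪s, t • (b - βh)⟫ = t * ⟪s, b - βh⟫ := real_inner_smul_right _ _ _
    have e3 : toEuc (X.mulVec (t • (b - βh))) = t • toEuc (X.mulVec (b - βh)) :=
      congrArg toEuc (X.mulVec_smul t (b - βh))
    have e4 : ‖toEuc (X.mulVec (t • (b - βh)))‖^2 = t^2 * C := by
      rw [e3, norm_smul]; simp [abs_of_pos ht0]; ring
    rw [e2, e4] at hmt
    have e5 : pen (βh + t • (b - βh)) ≤ (1 - t) * pen βh + t * pen b := by
      have heq : βh + t • (b - βh) = (1 - t) • βh + t • b := by module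
      rw [heq]
      calc pen ((1 - t) • βh + t • b) ≤ pen ((1 - t) • βh) + pen (t • b) := hadd _ _
        _ = (1 - t) * pen βh + t * pen b := by
            rw [hsmul (1 - t) (by linarith) βh, hsmul t ht0.le b]
    have key : t * (lam * pen βh + ⟪s, b - βh⟫) ≤ t * (lam * pen b + t/2 * C) := by
      nlinarith [mul_le_mul_of_nonneg_left e5 (le_of_lt hlam)]
    exact le_of_mul_le_mul_left key ht0
  refine le_of_forall_pos_le_add ?_
  intro ε hε
  have hCp : 0 < C + 1 := by linarith
  set t := min 1 (ε / (C + 1)) with htdef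
  have ht0 : 0 < t := lt_min one_pos (div_pos hε hCp)
  have ht1 : t ≤ 1 := min_le_left _ _
  have hte : t ≤ ε / (C + 1) := min_le_right _ _
  have htC : t/2 * C ≤ ε := by
    have h1 : t/2 * C ≤ t * C := by nlinarith
    have h2 : t * C ≤ (ε / (C + 1)) * C := mul_le_mul_of_nonneg_right hte hC0
    have h3 : (ε / (C + 1)) * C ≤ ε := by
      rw [div_mul_eq_mul_div, div_le_iff₀ hCp]
      nlinarith
    linarith
  have := step t ht0 ht1
  linarith

end Opt

/-- The set `V_β` of responses `y` for which some point on the solution path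
has the same pattern as `β` is convex. -/
theorem Vbeta_convex {n p k : ℕ}
    (X : Matrix (Fin n) (Fin p) ℝ)
    (u : Fin (k + 1) → EuclideanSpace ℝ (Fin p)) (hu : u 0 = 0)
    (pen : EuclideanSpace ℝ (Fin p) → ℝ)
    (hpen : ∀ x, pen x = Finset.univ.sup' Finset.univ_nonempty fun i => ⟪u i, x⟫)
    (β : EuclideanSpace ℝ (Fin p)) :
    Convex ℝ {y : EuclideanSpace ℝ (Fin n) | ∃ lam > 0,
        ∃ βh ∈ Smin X lam pen y, subdiff pen βh = subdiff pen β} := by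
  have hadd := pen_add u pen hpen
  have hsmul : ∀ (c : ℝ), 0 ≤ c → ∀ x, pen (c • x) = c * pen x :=
    fun c hc x => pen_smul u pen hpen c hc x
  intro y1 hy1 y2 hy2 a b ha hb hab
  obtain ⟨l1, hl1, b1, hS1, hD1⟩ := hy1
  obtain ⟨l2, hl2, b2, hS2, hD2⟩ := hy2
  rcases ha.eq_or_lt with ha0 | ha0
  · have hb1 : b = 1 := by rw [← ha0] at hab; linarith
    rw [← ha0, hb1]
    simpa using ⟨l2, hl2, b2, hS2, hD2⟩
  rcases hb.eq_or_lt with hb0 | hb0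
  · have ha1 : a = 1 := by rw [← hb0] at hab; linarith
    rw [← hb0, ha1]
    simpa using ⟨l1, hl1, b1, hS1, hD1⟩
  -- main case : 0 < a, 0 < b
  set lam := a * l1 + b * l2 with hlamdef
  have hlam : 0 < lam := add_pos (mul_pos ha0 hl1) (mul_pos hb0 hl2)
  set bc := a • b1 + b • b2 with hbc
  have hDD : subdiff pen b1 = subdiff pen b2 := hD1.trans hD2.symm
  have hcombo : subdiff pen bc = subdiff pen b1 :=
    subdiff_combo u pen hpen b1 b2 a b ha0 hb0 hDD
  refine ⟨lam, hlam, bc, ?_, hcombo.trans hD1⟩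
  apply Smin_of_subgrad X pen lam
  intro bb
  -- residual decomposition
  set s1 := toEuc (X.transpose.mulVec (y1 - toEuc (X.mulVec b1))) with hs1def
  set s2 := toEuc (X.transpose.mulVec (y2 - toEuc (X.mulVec b2))) with hs2def
  have hgs1 := subgrad_of_Smin X pen hadd hsmul l1 hl1 y1 b1 hS1
  have hgs2 := subgrad_of_Smin X pen hadd hsmul l2 hl2 y2 b2 hS2
  have hσ1 : l1⁻¹ • s1 ∈ subdiff pen b1 := subgrad_norm u pen hpen l1 hl1 b1 s1 hgs1
  have hσ2 : l2⁻¹ • s2 ∈ subdiff pen b2 := subgrad_norm u pen hpen l2 hl2 b2 s2 hgs2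
  have hσ1' : l1⁻¹ • s1 ∈ subdiff pen bc := hcombo.symm ▸ hσ1
  have hσ2' : l2⁻¹ • s2 ∈ subdiff pen bc := by
    rw [hcombo, hDD]; exact hσ2
  -- rewrite the residual
  have e1 : toEuc (X.mulVec bc) = a • toEuc (X.mulVec b1) + b • toEuc (X.mulVec b2) := by
    rw [hbc, WithLp.ofLp_add, WithLp.ofLp_smul, WithLp.ofLp_smul, tmE_add, tmE_smul, tmE_smul]
  have hsplit : (a • y1 + b • y2) - toEuc (X.mulVec bc)
      = a • (y1 - toEuc (X.mulVec b1)) + b • (y2 - toEuc (X.mulVec b2)) := by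
    rw [e1]; module
  rw [← WithLp.ofLp_sub, hsplit, WithLp.ofLp_add, WithLp.ofLp_smul, WithLp.ofLp_smul,
    WithLp.ofLp_sub, WithLp.ofLp_sub, tmE_add, tmE_smul, tmE_smul, ← hs1def, ← hs2def]
  rw [inner_add_left, real_inner_smul_left, real_inner_smul_left]
  -- scalar bookkeeping
  have c1 := hσ1' bb
  have c2 := hσ2' bb
  rw [real_inner_smul_left] at c1 c2
  have d1 : ⟪s1, bb - bc⟫ ≤ l1 * (pen bb - pen bc) := by
    have h := mul_le_mul_of_nonneg_left
      (show l1⁻¹ * ⟪s1, bb - bc⟫ ≤ pen bb - pen bc by linarith) hl1.le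
    rwa [← mul_assoc, mul_inv_cancel₀ hl1.ne', one_mul] at h
  have d2 : ⟪s2, bb - bc⟫ ≤ l2 * (pen bb - pen bc) := by
    have h := mul_le_mul_of_nonneg_left
      (show l2⁻¹ * ⟪s2, bb - bc⟫ ≤ pen bb - pen bc by linarith) hl2.le
    rwa [← mul_assoc, mul_inv_cancel₀ hl2.ne', one_mul] at h
  rw [hlamdef]
  nlinarith [mul_le_mul_of_nonneg_left d1 ha0.le, mul_le_mul_of_nonneg_left d2 hb0.le]

end
end

section
/- Let u_1,…,u_k ∈ ℝ^p and let φ : ℝ^p → ℝ be defined by φ(x) = max{⟨u_1,x⟩,…,⟨u_k,x⟩}. If x, v ∈ ℝ^p satisfy ∂φ(x) = ∂φ(v), then for every α ∈ [0,1], ∂φ(αx + (1−α)v) = ∂φ(x) = ∂φ(v). -/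
open scoped RealInnerProductSpace

noncomputable section

/-- For `φ(x) = max{⟪u_1,x⟫,…,⟪u_k,x⟫}`, if `∂φ(x) = ∂φ(v)` then
`∂φ(αx + (1−α)v) = ∂φ(x) = ∂φ(v)` for every `α ∈ [0,1]`. -/
theorem subdiff_convex_combination {p k : ℕ}
    (u : Fin (k + 1) → EuclideanSpace ℝ (Fin p))
    (φ : EuclideanSpace ℝ (Fin p) → ℝ)
    (hφ : ∀ x, φ x = Finset.univ.sup' Finset.univ_nonempty fun i => ⟪u i, x⟫)
    (x v : EuclideanSpace ℝ (Fin p))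
    (h : subdiff φ x = subdiff φ v) :
    ∀ α : ℝ, α ∈ Set.Icc (0 : ℝ) 1 →
      subdiff φ (α • x + (1 - α) • v) = subdiff φ x
      ∧ subdiff φ (α • x + (1 - α) • v) = subdiff φ v := by
  intro α hα
  obtain ⟨hα0, hα1⟩ := hα
  set z := α • x + (1 - α) • v with hz
  -- φ bounds
  have hle : ∀ (i : Fin (k+1)) (b), ⟪u i, b⟫ ≤ φ b := by
    intro i b
    rw [hφ b]
    exact Finset.le_sup' (fun i => (⟪u i, b⟫ : ℝ)) (Finset.mem_univ i)
  -- witness in subdiff φ x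
  obtain ⟨j, _, hj⟩ := Finset.exists_mem_eq_sup' (Finset.univ_nonempty)
    (fun i : Fin (k+1) => (⟪u i, x⟫ : ℝ))
  have hjx : φ x = ⟪u j, x⟫ := by rw [hφ x]; exact hj
  have hs0x : u j ∈ subdiff φ x := by
    intro b
    rw [inner_sub_right, hjx]
    have := hle j b
    linarith
  have hs0v : u j ∈ subdiff φ v := h ▸ hs0x
  set c : ℝ := ⟪u j, v - x⟫ with hc
  -- φ v = φ x + c
  have hfv : φ v = φ x + c := by
    have h1 := hs0x v
    have h2 := hs0v x
    have hxy : ⟪u j, x - v⟫ = -c := by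
      rw [hc, inner_sub_right, inner_sub_right]; ring
    rw [hxy] at h2
    linarith
  -- convexity along segment
  have hconv : φ z ≤ α * φ x + (1 - α) * φ v := by
    rw [hφ z]
    apply Finset.sup'_le
    intro i _
    have : ⟪u i, z⟫ = α * ⟪u i, x⟫ + (1 - α) * ⟪u i, v⟫ := by
      rw [hz, inner_add_right, real_inner_smul_right, real_inner_smul_right]
    rw [this]
    have h1 := hle i x
    have h2 := hle i v
    nlinarith [hle i x, hle i v]
  have hzx : z - x = (1 - α) • (v - x) := by rw [hz]; module
  have hzv : z - v = α • (x - v) := by rw [hz]; module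
  have hizx : ∀ s : EuclideanSpace ℝ (Fin p), ⟪s, z - x⟫ = (1-α) * ⟪s, v - x⟫ := by
    intro s; rw [hzx, real_inner_smul_right]
  have hizv : ∀ s : EuclideanSpace ℝ (Fin p), ⟪s, z - v⟫ = α * ⟪s, x - v⟫ := by
    intro s; rw [hzv, real_inner_smul_right]
  -- φ z exactly
  have hfz : φ z = φ x + (1 - α) * c := by
    have h1 := hs0x z
    rw [hizx (u j), ← hc] at h1
    have : α * φ x + (1 - α) * φ v = φ x + (1 - α) * c := by rw [hfv]; ring
    linarith [hconv]
  -- main equality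
  have key : subdiff φ z = subdiff φ x := by
    ext s
    constructor
    · intro hs
      rcases eq_or_lt_of_le hα0 with h0 | h0
      · have : z = v := by rw [hz, ← h0]; module
        rw [this] at hs; rwa [h]
      rcases eq_or_lt_of_le hα1 with h1 | h1
      · have : z = x := by rw [hz, h1]; module
        rwa [this] at hs
      -- 0 < α < 1
      have e1 := hs x
      have e2 := hs v
      have hxz : x - z = -((1-α) • (v - x)) := by rw [hz]; module
      have hvz : v - z = α • (v - x) := by rw [hz]; module
      rw [show (⟪s, x - z⟫ : ℝ) = -((1-α) * ⟪s, v - x⟫) by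
        rw [hxz, inner_neg_right, real_inner_smul_right], hfz] at e1
      rw [show (⟪s, v - z⟫ : ℝ) = α * ⟪s, v - x⟫ by
        rw [hvz, real_inner_smul_right], hfz, hfv] at e2
      -- from e1: (1-α)*⟪s,v-x⟫ ≥ (1-α)*c ; from e2: α*⟪s,v-x⟫ ≤ α*c
      have hsc : ⟪s, v - x⟫ = c := by
        have g1 : (1-α) * c ≤ (1-α) * ⟪s, v - x⟫ := by linarith
        have g2 : α * ⟪s, v - x⟫ ≤ α * c := by linarith
        have g1' := le_of_mul_le_mul_left (by linarith : (1-α)*c ≤ (1-α)*⟪s, v-x⟫) (by linarith : (0:ℝ) < 1-α)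
        have g2' := le_of_mul_le_mul_left g2 h0
        linarith
      intro b
      have hb := hs b
      have hbx : ⟪s, b - x⟫ = ⟪s, b - z⟫ + (1-α) * c := by
        rw [← hsc, ← hizx s, ← inner_add_right]
        congr 1
        module
      rw [hbx, hfz] at *
      linarith
    · intro hs
      have hsv : s ∈ subdiff φ v := h ▸ hs
      intro b
      have e1 := hs b
      have e2 := hsv b
      have hbz : ⟪s, b - z⟫ = α * ⟪s, b - x⟫ + (1-α) * ⟪s, b - v⟫ := by
        rw [← real_inner_smul_right, ← real_inner_smul_right, ← inner_add_right]
        congr 1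
        rw [hz]; module
      rw [hbz]
      nlinarith [hconv]
  exact ⟨key, key.trans h⟩
end
end
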